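/- For every integer k ≥ 1, the characteristic polynomial of the adjacency matrix of the graph 𝒮_{2k+1} equals X·(X² − (k+1))·(X² − 1)^{k−1}; equivalently, the spectrum of 𝒮_{2k+1} is {±√(k+1), 0, (±1)^{k−1}}. -/

import Mathlib

open Polynomial
open scoped Classical

/-- The adjacency matrix (over `ℝ`) of a finite simple graph. -/
noncomputable def adjMat {V : Type*} [Fintype V] (G : SimpleGraph V) : Matrix V V ℝ :=
  Matrix.of fun i j => if G.Adj i j then 1 else 0

/-- `𝒮_{2k+1}`, the subdivision of the star `K_{1,k}`: vertices are the center `Sum.inl ()`,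
the middle vertices `Sum.inr (Sum.inl i)` and the leaves `Sum.inr (Sum.inr i)`;
the center is joined to each middle vertex `aᵢ`, and `aᵢ` is joined to the leaf `bᵢ`. -/
def starSubdiv (k : ℕ) : SimpleGraph (Unit ⊕ (Fin k ⊕ Fin k)) :=
  SimpleGraph.fromRel fun x y =>
    (∃ i : Fin k, x = Sum.inl () ∧ y = Sum.inr (Sum.inl i)) ∨
    (∃ i : Fin k, x = Sum.inr (Sum.inl i) ∧ y = Sum.inr (Sum.inr i))

set_option maxHeartbeats 4000000
set_option synthInstance.maxHeartbeats 1000000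

/-- The characteristic polynomial of the adjacency matrix of `𝒮_{2k+1}` equals
`X (X² − (k+1)) (X² − 1)^{k−1}`. -/
theorem charpoly_starSubdiv (k : ℕ) (hk : 1 ≤ k) :
    (adjMat (starSubdiv k)).charpoly =
      X * (X ^ 2 - C ((k : ℝ) + 1)) * (X ^ 2 - 1) ^ (k - 1) := by
  classical
  let φ : ℝ[X] →+* RatFunc ℝ := (algebraMap ℝ[X] (RatFunc ℝ) : ℝ[X] →+* RatFunc ℝ)
  apply RatFunc.algebraMap_injective ℝ
  show φ _ = φ _
  set x : RatFunc ℝ := RatFunc.X with hxdef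
  have hφX : φ X = x := RatFunc.algebraMap_X
  have hx : x ≠ 0 := RatFunc.X_ne_zero
  have hx2 : x ^ 2 - 1 ≠ 0 := by
    intro h
    have h2 : φ (X ^ 2 - 1) = φ 0 := by
      simpa [map_sub, map_pow, map_one, hφX] using h
    have h3 := RatFunc.algebraMap_injective ℝ h2
    have h4 := congrArg (fun p => Polynomial.coeff p 2) h3
    simp [Polynomial.coeff_one] at h4
  set A : RatFunc ℝ := x - x⁻¹ with hAdef
  have hxA : x * A = x ^ 2 - 1 := by
    rw [hAdef, mul_sub, mul_inv_cancel₀ hx]; ring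
  have hA : A ≠ 0 := by
    intro h
    apply hx2
    rw [← hxA, h, mul_zero]
  rw [Matrix.charpoly, RingHom.map_det]
  set B₁ : Matrix Unit (Fin k ⊕ Fin k) (RatFunc ℝ) :=
    Matrix.of fun _ j => Sum.elim (fun _ => (-1 : RatFunc ℝ)) (fun _ => 0) j with hB₁
  set C₁ : Matrix (Fin k ⊕ Fin k) Unit (RatFunc ℝ) :=
    Matrix.of fun i _ => Sum.elim (fun _ => (-1 : RatFunc ℝ)) (fun _ => 0) i with hC₁
  have hN : φ.mapMatrix (Matrix.charmatrix (adjMat (starSubdiv k))) =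
      Matrix.fromBlocks (x • 1) B₁ C₁
        (Matrix.fromBlocks (x • (1 : Matrix (Fin k) (Fin k) (RatFunc ℝ))) (-1) (-1) (x • 1)) := by
    ext i j
    rcases i with _ | (i | i) <;> rcases j with _ | (j | j) <;>
      simp [hB₁, hC₁, RingHom.mapMatrix_apply, Matrix.map_apply, Matrix.charmatrix_apply,
        Matrix.diagonal_apply, adjMat, starSubdiv, SimpleGraph.fromRel_adj, Matrix.one_apply,
        Matrix.smul_apply, apply_ite φ, hφX, eq_comm, mul_ite, map_one, map_zero] <;>
      split_ifs <;> simp_all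
  rw [hN]
  letI inv1 : Invertible (x • (1 : Matrix Unit Unit (RatFunc ℝ))) :=
    ⟨x⁻¹ • 1, by rw [smul_mul_smul_comm, inv_mul_cancel₀ hx, one_mul, one_smul],
      by rw [smul_mul_smul_comm, mul_inv_cancel₀ hx, one_mul, one_smul]⟩
  letI inv2 : Invertible (x • (1 : Matrix (Fin k) (Fin k) (RatFunc ℝ))) :=
    ⟨x⁻¹ • 1, by rw [smul_mul_smul_comm, inv_mul_cancel₀ hx, one_mul, one_smul],
      by rw [smul_mul_smul_comm, mul_inv_cancel₀ hx, one_mul, one_smul]⟩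
  rw [Matrix.det_fromBlocks₁₁]
  have hinv1 : ⅟(x • (1 : Matrix Unit Unit (RatFunc ℝ))) = x⁻¹ • 1 := rfl
  rw [hinv1]
  have hcancel : ∀ c : RatFunc ℝ, A * (c * (x⁻¹ / A)) = c * x⁻¹ := by
    intro c
    rw [mul_left_comm]
    congr 1
    field_simp
  set Jm : Matrix (Fin k) (Fin k) (RatFunc ℝ) := Matrix.of fun _ _ => x⁻¹ with hJm
  have hSchur1 :
      Matrix.fromBlocks (x • (1 : Matrix (Fin k) (Fin k) (RatFunc ℝ))) (-1) (-1) (x • 1)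
          - C₁ * (x⁻¹ • (1 : Matrix Unit Unit (RatFunc ℝ))) * B₁ =
        Matrix.fromBlocks (x • (1 : Matrix (Fin k) (Fin k) (RatFunc ℝ)) - Jm) (-1) (-1)
          (x • 1) := by
    ext i j
    rcases i with i | i <;> rcases j with j | j <;>
      simp [hB₁, hC₁, hJm, Matrix.mul_apply, Matrix.one_apply, Matrix.smul_apply, smul_eq_mul]
  rw [hSchur1, Matrix.det_fromBlocks₂₂]
  have hinv2 : ⅟(x • (1 : Matrix (Fin k) (Fin k) (RatFunc ℝ))) = x⁻¹ • 1 := rfl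
  rw [hinv2]
  have hSchur2 :
      x • (1 : Matrix (Fin k) (Fin k) (RatFunc ℝ)) - Jm - (-1) * (x⁻¹ • (1 : Matrix (Fin k) (Fin k) (RatFunc ℝ))) * (-1) =
        A • (1 + Matrix.replicateCol Unit (fun _ => -(x⁻¹ / A)) *
          Matrix.replicateRow Unit (fun _ => (1 : RatFunc ℝ))) := by
    ext i j
    by_cases h : i = j
    · simp [hJm, Matrix.mul_apply, Matrix.one_apply, Matrix.smul_apply, h,
        Matrix.replicateCol_apply, Matrix.replicateRow_apply, smul_eq_mul]
      rw [mul_add, mul_one, mul_neg, ← one_mul (x⁻¹ / A), hcancel, one_mul, hAdef]; ring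
    · simp [hJm, Matrix.mul_apply, Matrix.one_apply, Matrix.smul_apply, h,
        Matrix.replicateCol_apply, Matrix.replicateRow_apply, smul_eq_mul]
      rw [← one_mul (x⁻¹ / A), hcancel, one_mul]
  have hdet1 : (x • (1 : Matrix Unit Unit (RatFunc ℝ))).det = x := by
    rw [Matrix.det_unique]; simp
  have hdetk : (x • (1 : Matrix (Fin k) (Fin k) (RatFunc ℝ))).det = x ^ k := by
    rw [Matrix.det_smul]; simp
  rw [hSchur2, hdet1, hdetk, Matrix.det_smul, Matrix.det_one_add_replicateCol_mul_replicateRow]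
  have hdot : dotProduct (fun _ : Fin k => (1 : RatFunc ℝ)) (fun _ => -(x⁻¹ / A)) =
      -(k * (x⁻¹ / A)) := by
    simp [dotProduct, Finset.sum_const, mul_comm]
  rw [hdot]
  have hRHS : φ (X * (X ^ 2 - C ((k : ℝ) + 1)) * (X ^ 2 - 1) ^ (k - 1)) =
      x * (x ^ 2 - ((k : RatFunc ℝ) + 1)) * (x ^ 2 - 1) ^ (k - 1) := by
    simp [map_mul, map_pow, map_sub, map_add, map_one, hφX, map_natCast]
  rw [hRHS]
  obtain ⟨m, rfl⟩ : ∃ m, k = m + 1 := ⟨k - 1, (Nat.succ_pred_eq_of_pos hk).symm⟩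
  simp only [Nat.add_sub_cancel, Fintype.card_fin]
  have key : x * (A * (1 + -(((m + 1 : ℕ) : RatFunc ℝ) * (x⁻¹ / A)))) =
      x ^ 2 - (((m + 1 : ℕ) : RatFunc ℝ) + 1) := by
    rw [mul_add, mul_one, mul_neg, hcancel, mul_add, hxA, mul_neg, mul_left_comm,
      mul_inv_cancel₀ hx, mul_one]
    ring
  calc x * (x ^ (m + 1) * (A ^ (m + 1) * (1 + -(((m + 1 : ℕ) : RatFunc ℝ) * (x⁻¹ / A)))))
      = x * ((x * A) ^ m * (x * (A * (1 + -(((m + 1 : ℕ) : RatFunc ℝ) * (x⁻¹ / A)))))) := by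
        rw [mul_pow, pow_succ, pow_succ]; ring
    _ = x * ((x ^ 2 - 1) ^ m * (x ^ 2 - (((m + 1 : ℕ) : RatFunc ℝ) + 1))) := by rw [hxA, key]
    _ = x * (x ^ 2 - (((m + 1 : ℕ) : RatFunc ℝ) + 1)) * (x ^ 2 - 1) ^ m := by ring
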